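/- For every fixed μ > 0, the value function x ↦ V_μ(x) is continuous on ℝ^n. -/

import Mathlib

set_option maxHeartbeats 1000000


/-- A convex continuous function on a Euclidean space admits a "conic" lower bound
`g y ≥ c - K * ‖y‖`. -/
lemma aff_minor {m : ℕ} (g : EuclideanSpace ℝ (Fin m) → ℝ)
    (hg : ConvexOn ℝ Set.univ g) (hgc : Continuous g) :
    ∃ c K : ℝ, 0 ≤ K ∧ ∀ y, c - K * ‖y‖ ≤ g y := by
  obtain ⟨ymin, -, hmin⟩ :=
    (isCompact_closedBall (0 : EuclideanSpace ℝ (Fin m)) 1).exists_isMinOn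
      ⟨0, by simp⟩ hgc.continuousOn
  obtain ⟨ymax, -, hmax⟩ :=
    (isCompact_closedBall (0 : EuclideanSpace ℝ (Fin m)) 1).exists_isMaxOn
      ⟨0, by simp⟩ hgc.continuousOn
  set c := g ymin with hc
  set bmax := g ymax with hb
  have h0c : c ≤ g 0 := hmin (by simp)
  have h0b : g 0 ≤ bmax := hmax (by simp)
  refine ⟨c, bmax - c, by linarith, fun y => ?_⟩
  rcases le_or_gt ‖y‖ 1 with h | h
  · have hy : c ≤ g y := hmin (by simpa [Metric.mem_closedBall, dist_zero_right] using h)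
    nlinarith [norm_nonneg y]
  · set t := ‖y‖ with htdef
    have ht0 : (0 : ℝ) < t := by linarith
    have hu : ‖t⁻¹ • y‖ = 1 := by
      rw [norm_smul, Real.norm_eq_abs, abs_of_pos (inv_pos.mpr ht0)]
      field_simp
      rfl
    have hcu : c ≤ g (t⁻¹ • y) :=
      hmin (by simp [Metric.mem_closedBall, dist_zero_right, hu])
    have hconv : g ((1 - t⁻¹) • (0 : EuclideanSpace ℝ (Fin m)) + t⁻¹ • y) ≤
        (1 - t⁻¹) * g 0 + t⁻¹ * g y := by
      apply hg.2 (Set.mem_univ (0 : EuclideanSpace ℝ (Fin m))) (Set.mem_univ y)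
      · have : t⁻¹ ≤ 1 := by
          rw [inv_le_one_iff₀]; right; linarith
        linarith
      · positivity
      · ring
    rw [smul_zero, zero_add] at hconv
    have hcomb : c ≤ (1 - t⁻¹) * g 0 + t⁻¹ * g y := le_trans hcu hconv
    have htinv : 0 < t⁻¹ := inv_pos.mpr ht0
    -- multiply through by t
    have := mul_le_mul_of_nonneg_left hcomb (le_of_lt ht0)
    have hti : t * t⁻¹ = 1 := mul_inv_cancel₀ (ne_of_gt ht0)
    nlinarith [h0b, h0c]

/-- For every fixed `μ > 0`, the value function `x ↦ V_μ(x)` is continuous on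
`ℝ^n`. -/
theorem stmt_10 {n m : ℕ}
    (F : EuclideanSpace ℝ (Fin n) → EuclideanSpace ℝ (Fin m))
    (g : EuclideanSpace ℝ (Fin m) → ℝ)
    (D : Set (EuclideanSpace ℝ (Fin n)))
    (hF : ContDiff ℝ 2 F)
    (hg : ConvexOn ℝ Set.univ g) (hgc : Continuous g)
    (hDne : D.Nonempty) (hDcl : IsClosed D) (hDcv : Convex ℝ D)
    (p : ℝ → EuclideanSpace ℝ (Fin n) → EuclideanSpace ℝ (Fin n))
    (V : ℝ → EuclideanSpace ℝ (Fin n) → ℝ)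
    (hp : ∀ μ, 0 < μ → ∀ x, p μ x ∈ D ∧ ∀ z ∈ D,
      g (F x + fderiv ℝ F x (p μ x - x)) + μ / 2 * ‖p μ x - x‖ ^ 2 ≤
      g (F x + fderiv ℝ F x (z - x)) + μ / 2 * ‖z - x‖ ^ 2)
    (hV : ∀ μ, 0 < μ → ∀ x,
      V μ x = g (F x + fderiv ℝ F x (p μ x - x)) + μ / 2 * ‖p μ x - x‖ ^ 2)
    (μ : ℝ) (hμ : 0 < μ) :
    Continuous (V μ) := by
  classical
  -- the objective as a jointly continuous function
  set Φ : EuclideanSpace ℝ (Fin n) × EuclideanSpace ℝ (Fin n) → ℝ := fun q =>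
    g (F q.1 + fderiv ℝ F q.1 (q.2 - q.1)) + μ / 2 * ‖q.2 - q.1‖ ^ 2 with hΦdef
  have hA : Continuous (fderiv ℝ F) := hF.continuous_fderiv (by simp)
  have h1 : Continuous fun q : EuclideanSpace ℝ (Fin n) × EuclideanSpace ℝ (Fin n) =>
      F q.1 + fderiv ℝ F q.1 (q.2 - q.1) := by
    apply Continuous.add
    · exact hF.continuous.comp continuous_fst
    · exact (hA.comp continuous_fst).clm_apply (continuous_snd.sub continuous_fst)
  have hΦ : Continuous Φ :=
    (hgc.comp h1).add (continuous_const.mul ((continuous_snd.sub continuous_fst).norm.pow 2))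
  have hVx : ∀ x, V μ x = Φ (x, p μ x) := fun x => hV μ hμ x
  have hVle : ∀ x, ∀ z ∈ D, V μ x ≤ Φ (x, z) := by
    intro x z hz
    rw [hVx x]
    exact (hp μ hμ x).2 z hz
  have hpD : ∀ x, p μ x ∈ D := fun x => (hp μ hμ x).1
  obtain ⟨z₀, hz₀⟩ := hDne
  obtain ⟨c, K, hK, hcK⟩ := aff_minor g hg hgc
  rw [continuous_iff_continuousAt]
  intro x₀
  -- bounds on the compact ball around x₀
  have hball : IsCompact (Metric.closedBall x₀ 1) := isCompact_closedBall _ _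
  have hballne : (Metric.closedBall x₀ 1).Nonempty := ⟨x₀, by simp⟩
  obtain ⟨x₁, -, hC0⟩ := hball.exists_isMaxOn hballne (hF.continuous.norm.continuousOn)
  set C₀ : ℝ := ‖F x₁‖ with hC0def
  have hC0' : ∀ x ∈ Metric.closedBall x₀ 1, ‖F x‖ ≤ C₀ := fun x hx => hC0 hx
  have hC0nn : 0 ≤ C₀ := norm_nonneg _
  obtain ⟨x₂, -, hC1⟩ := hball.exists_isMaxOn hballne (hA.norm.continuousOn)
  set C₁ : ℝ := ‖fderiv ℝ F x₂‖ with hC1def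
  have hC1' : ∀ x ∈ Metric.closedBall x₀ 1, ‖fderiv ℝ F x‖ ≤ C₁ := fun x hx => hC1 hx
  have hC1nn : 0 ≤ C₁ := norm_nonneg _
  obtain ⟨x₃, -, hM⟩ := hball.exists_isMaxOn hballne
    ((hΦ.comp (continuous_id.prodMk continuous_const)).continuousOn
      (s := Metric.closedBall x₀ 1))
  set M : ℝ := Φ (x₃, z₀) with hMdef
  have hM' : ∀ x ∈ Metric.closedBall x₀ 1, Φ (x, z₀) ≤ M := fun x hx => hM hx
  -- uniform bound on the minimizers over the ball
  set N : ℝ := max 0 (M - c + K * C₀) + K * C₁ with hNdef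
  have hNnn : 0 ≤ N := add_nonneg (le_max_left _ _) (mul_nonneg hK hC1nn)
  set R : ℝ := max 1 (2 * N / μ) with hRdef
  have hR1 : (1:ℝ) ≤ R := le_max_left _ _
  have hbound : ∀ x ∈ Metric.closedBall x₀ 1, ‖p μ x - x‖ ≤ R := by
    intro x hx
    set r : ℝ := ‖p μ x - x‖ with hrdef
    have hrnn : 0 ≤ r := norm_nonneg _
    have h1 : Φ (x, p μ x) ≤ M := le_trans (by rw [← hVx x]; exact hVle x z₀ hz₀) (hM' x hx)
    have hynorm : ‖F x + fderiv ℝ F x (p μ x - x)‖ ≤ C₀ + C₁ * r := by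
      calc ‖F x + fderiv ℝ F x (p μ x - x)‖
          ≤ ‖F x‖ + ‖fderiv ℝ F x (p μ x - x)‖ := norm_add_le _ _
        _ ≤ C₀ + C₁ * r := by
            gcongr
            · exact hC0' x hx
            · exact le_trans ((fderiv ℝ F x).le_opNorm _)
                (by gcongr; exact hC1' x hx)
    have hlow : c - K * (C₀ + C₁ * r) + μ / 2 * r ^ 2 ≤ Φ (x, p μ x) := by
      have := hcK (F x + fderiv ℝ F x (p μ x - x))
      have hK' : K * ‖F x + fderiv ℝ F x (p μ x - x)‖ ≤ K * (C₀ + C₁ * r) :=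
        mul_le_mul_of_nonneg_left hynorm hK
      simp only [hΦdef]
      linarith
    clear_value Φ r C₀ C₁ M N R
    have hkey : μ / 2 * r ^ 2 ≤ max 0 (M - c + K * C₀) + K * C₁ * r := by
      have h2 : M - c + K * C₀ ≤ max 0 (M - c + K * C₀) := le_max_right _ _
      have hexp : K * (C₀ + C₁ * r) = K * C₀ + K * C₁ * r := by ring
      linarith
    rcases le_or_gt r 1 with h | h
    · rw [hRdef]
      exact le_trans h (le_max_left _ _)
    · have hrpos : (0:ℝ) < r := lt_trans one_pos h
      have hstep : μ / 2 * r ^ 2 ≤ N * r := by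
        have hmax : max 0 (M - c + K * C₀) ≤ max 0 (M - c + K * C₀) * r :=
          le_mul_of_one_le_right (le_max_left _ _) h.le
        have hexp : N * r = max 0 (M - c + K * C₀) * r + K * C₁ * r := by
          rw [hNdef]; ring
        linarith
      have hμr : μ / 2 * r ≤ N := by
        by_contra hcon
        push_neg at hcon
        have h5 : N * r < (μ / 2 * r) * r := mul_lt_mul_of_pos_right hcon hrpos
        have h6 : (μ / 2 * r) * r = μ / 2 * r ^ 2 := by ring
        linarith
      have hrle : r ≤ 2 * N / μ := by
        rw [le_div_iff₀ hμ]
        linarith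
      rw [hRdef]
      exact le_trans hrle (le_max_right _ _)
  -- uniform continuity on a compact product set
  set Q : Set (EuclideanSpace ℝ (Fin n) × EuclideanSpace ℝ (Fin n)) :=
    Metric.closedBall x₀ 1 ×ˢ Metric.closedBall (0 : EuclideanSpace ℝ (Fin n)) (‖x₀‖ + 1 + R) with hQdef
  have hQcomp : IsCompact Q := (isCompact_closedBall _ _).prod (isCompact_closedBall _ _)
  have hUC : UniformContinuousOn Φ Q :=
    hQcomp.uniformContinuousOn_of_continuous hΦ.continuousOn
  have hmemQ : ∀ x ∈ Metric.closedBall x₀ 1, (x, p μ x) ∈ Q := by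
    intro x hx
    refine ⟨hx, ?_⟩
    rw [Metric.mem_closedBall, dist_zero_right]
    have h1 : ‖p μ x‖ ≤ ‖p μ x - x‖ + ‖x‖ := by
      calc ‖p μ x‖ = ‖(p μ x - x) + x‖ := by congr 1; abel
        _ ≤ ‖p μ x - x‖ + ‖x‖ := norm_add_le _ _
    have h2 : ‖x‖ ≤ ‖x₀‖ + 1 := by
      have := Metric.mem_closedBall.mp hx
      calc ‖x‖ = ‖x₀ + (x - x₀)‖ := by congr 1; abel
        _ ≤ ‖x₀‖ + ‖x - x₀‖ := norm_add_le _ _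
        _ ≤ ‖x₀‖ + 1 := by
            have : ‖x - x₀‖ = dist x x₀ := (dist_eq_norm _ _).symm
            linarith [Metric.mem_closedBall.mp hx, dist_eq_norm x x₀]
    have h3 := hbound x hx
    linarith
  have hmemQ' : ∀ x ∈ Metric.closedBall x₀ 1, ((x₀ : EuclideanSpace ℝ (Fin n)), p μ x) ∈ Q := by
    intro x hx
    exact ⟨by simp, (hmemQ x hx).2⟩
  -- continuity at x₀ via ε-δ
  rw [Metric.continuousAt_iff]
  intro ε hε
  -- upper estimate: V μ x ≤ Φ (x, p μ x₀) and the latter is continuous in x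
  have hcont1 : ContinuousAt (fun x => Φ (x, p μ x₀)) x₀ :=
    (hΦ.comp (continuous_id.prodMk continuous_const)).continuousAt
  obtain ⟨δ₁, hδ₁, hδ₁'⟩ := Metric.continuousAt_iff.mp hcont1 ε hε
  obtain ⟨δ₂, hδ₂, hδ₂'⟩ := Metric.uniformContinuousOn_iff.mp hUC ε hε
  refine ⟨min δ₁ (min δ₂ 1), by positivity, fun {x} hx => ?_⟩
  have hxδ₁ : dist x x₀ < δ₁ := lt_of_lt_of_le hx (min_le_left _ _)
  have hxδ₂ : dist x x₀ < δ₂ := lt_of_lt_of_le hx ((min_le_right _ _).trans (min_le_left _ _))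
  have hxball : x ∈ Metric.closedBall x₀ 1 := by
    rw [Metric.mem_closedBall]
    exact le_of_lt (lt_of_lt_of_le hx ((min_le_right _ _).trans (min_le_right _ _)))
  rw [Real.dist_eq, abs_sub_lt_iff]
  constructor
  · -- V μ x - V μ x₀ < ε
    have h1 : V μ x ≤ Φ (x, p μ x₀) := hVle x (p μ x₀) (hpD x₀)
    have h2 : dist (Φ (x, p μ x₀)) (Φ (x₀, p μ x₀)) < ε := hδ₁' hxδ₁
    rw [Real.dist_eq, abs_sub_lt_iff] at h2
    have h3 : Φ (x₀, p μ x₀) = V μ x₀ := (hVx x₀).symm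
    linarith [h2.1]
  · -- V μ x₀ - V μ x < ε
    have h1 : V μ x₀ ≤ Φ (x₀, p μ x) := hVle x₀ (p μ x) (hpD x)
    have hdq : dist ((x₀ : EuclideanSpace ℝ (Fin n)), p μ x) (x, p μ x) < δ₂ := by
      rw [Prod.dist_eq]
      simp only [dist_self]
      rw [max_eq_left dist_nonneg, dist_comm]
      exact hxδ₂
    have h2 := hδ₂' _ (hmemQ' x hxball) _ (hmemQ x hxball) hdq
    rw [Real.dist_eq, abs_sub_lt_iff] at h2
    have h3 : Φ (x, p μ x) = V μ x := (hVx x).symm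
    linarith [h2.1]
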